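/- Entropy strictly decreases under temperature sharpening of a non-uniform softmax distribution: if π = softmax(f) for f ∈ ℝ^V not constant, and π^{(β)} = softmax(β f) for β > 1, then the Shannon entropy H(π^{(β)}) < H(π). -/

import Mathlib

/-- softmax on `Fin V`. -/
noncomputable def softmax {V : ℕ} (f : Fin V → ℝ) : Fin V → ℝ :=
  fun v => Real.exp (f v) / ∑ w, Real.exp (f w)

/-- Shannon entropy of a vector on `Fin V`. -/
noncomputable def shannonEntropy {V : ℕ} (p : Fin V → ℝ) : ℝ :=
  -∑ v, p v * Real.log (p v)

lemma term_nonneg (β x y : ℝ) (hβ : 1 < β) :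
    0 ≤ (Real.exp (y + β * x) - Real.exp (x + β * y)) * (x - y) := by
  rcases le_total x y with h | h
  · have h1 : y + β * x ≤ x + β * y := by nlinarith
    have h2 := Real.exp_le_exp.mpr h1
    nlinarith
  · have h1 : x + β * y ≤ y + β * x := by nlinarith
    have h2 := Real.exp_le_exp.mpr h1
    nlinarith

lemma term_pos (β x y : ℝ) (hβ : 1 < β) (hxy : x ≠ y) :
    0 < (Real.exp (y + β * x) - Real.exp (x + β * y)) * (x - y) := by
  rcases lt_or_gt_of_ne hxy with h | h
  · have h1 : y + β * x < x + β * y := by nlinarith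
    have h2 := Real.exp_lt_exp.mpr h1
    nlinarith
  · have h1 : x + β * y < y + β * x := by nlinarith
    have h2 := Real.exp_lt_exp.mpr h1
    nlinarith

theorem stmt_16 (V : ℕ) (hV : 1 ≤ V) (f : Fin V → ℝ)
    (hf : ∃ v w : Fin V, f v ≠ f w) (β : ℝ) (hβ : 1 < β) :
    shannonEntropy (softmax (fun v => β * f v)) < shannonEntropy (softmax f) := by
  classical
  haveI : NeZero V := ⟨by omega⟩
  have hne : (Finset.univ : Finset (Fin V)).Nonempty := Finset.univ_nonempty
  set A : ℝ := ∑ w, Real.exp (f w) with hAdef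
  set B : ℝ := ∑ w, Real.exp (β * f w) with hBdef
  have hA : 0 < A := Finset.sum_pos (fun i _ => Real.exp_pos _) hne
  have hB : 0 < B := Finset.sum_pos (fun i _ => Real.exp_pos _) hne
  set p : Fin V → ℝ := fun v => Real.exp (f v) / A with hpdef
  set q : Fin V → ℝ := fun v => Real.exp (β * f v) / B with hqdef
  have hp : ∀ v, 0 < p v := fun v => div_pos (Real.exp_pos _) hA
  have hq : ∀ v, 0 < q v := fun v => div_pos (Real.exp_pos _) hB
  have sump : ∑ v, p v = 1 := by
    simp only [hpdef]
    rw [← Finset.sum_div, div_self hA.ne']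
  have sumq : ∑ v, q v = 1 := by
    simp only [hqdef]
    rw [← Finset.sum_div, div_self hB.ne']
  have hlogp : ∀ v, Real.log (p v) = f v - Real.log A := by
    intro v
    rw [hpdef]
    rw [Real.log_div (Real.exp_ne_zero _) hA.ne', Real.log_exp]
  -- mean term strictly positive
  have hmean : 0 < ∑ v, (q v - p v) * f v := by
    have key : 0 < ∑ v, ∑ w, (Real.exp (f w) * Real.exp (β * f v)
        - Real.exp (f v) * Real.exp (β * f w)) * (f v - f w) := by
      apply Finset.sum_pos'
      · intro v _
        apply Finset.sum_nonneg
        intro w _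
        have h := term_nonneg β (f v) (f w) hβ
        rw [Real.exp_add, Real.exp_add] at h
        linarith
      · obtain ⟨v₀, w₀, hvw⟩ := hf
        refine ⟨v₀, Finset.mem_univ _, ?_⟩
        apply Finset.sum_pos'
        · intro w _
          have h := term_nonneg β (f v₀) (f w) hβ
          rw [Real.exp_add, Real.exp_add] at h
          linarith
        · refine ⟨w₀, Finset.mem_univ _, ?_⟩
          have h := term_pos β (f v₀) (f w₀) hβ hvw
          rw [Real.exp_add, Real.exp_add] at h
          linarith
    -- relate the double sum to the mean difference
    set g : Fin V → Fin V → ℝ := fun v w =>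
      Real.exp (f w) * Real.exp (β * f v) - Real.exp (f v) * Real.exp (β * f w) with hg
    have hanti : ∀ v w, g w v = - g v w := by
      intro v w; simp only [hg]; ring
    have hT : ∑ v, ∑ w, g v w * (f v - f w) = 2 * ∑ v, ∑ w, g v w * f v := by
      have h1 : ∑ v, ∑ w, g v w * f w = - ∑ v, ∑ w, g v w * f v := by
        calc ∑ v, ∑ w, g v w * f w = ∑ w, ∑ v, g v w * f w := Finset.sum_comm
          _ = ∑ w, ∑ v, -(g w v * f w) := by
              apply Finset.sum_congr rfl; intro w _
              apply Finset.sum_congr rfl; intro v _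
              rw [hanti v w]; ring
          _ = - ∑ w, ∑ v, g w v * f w := by
              simp [Finset.sum_neg_distrib]
      have h2 : ∑ v, ∑ w, g v w * (f v - f w)
          = (∑ v, ∑ w, g v w * f v) - ∑ v, ∑ w, g v w * f w := by
        rw [← Finset.sum_sub_distrib]
        apply Finset.sum_congr rfl
        intro v _
        rw [← Finset.sum_sub_distrib]
        apply Finset.sum_congr rfl
        intro w _; ring
      rw [h2, h1]; ring
    have hS : ∑ v, ∑ w, g v w * f v = A * B * ∑ v, (q v - p v) * f v := by
      rw [Finset.mul_sum]
      apply Finset.sum_congr rfl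
      intro v _
      rw [← Finset.sum_mul]
      have : ∑ w, g v w = A * Real.exp (β * f v) - B * Real.exp (f v) := by
        simp only [hg]
        rw [Finset.sum_sub_distrib, ← Finset.sum_mul, ← Finset.mul_sum]
        rw [← hAdef, ← hBdef]
        ring
      rw [this, hpdef, hqdef]
      field_simp
    have key2 : 0 < 2 * (A * B * ∑ v, (q v - p v) * f v) := by
      rw [← hS, ← hT]; exact key
    nlinarith [mul_pos hA hB]
  -- Gibbs: KL(q‖p) ≥ 0
  have hgibbs : ∑ v, q v * Real.log (p v) - ∑ v, q v * Real.log (q v) ≤ 0 := by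
    have : ∀ v ∈ Finset.univ, q v * Real.log (p v) - q v * Real.log (q v) ≤ p v - q v := by
      intro v _
      have hlog : Real.log (p v / q v) ≤ p v / q v - 1 :=
        Real.log_le_sub_one_of_pos (div_pos (hp v) (hq v))
      rw [Real.log_div (hp v).ne' (hq v).ne'] at hlog
      have := mul_le_mul_of_nonneg_left hlog (hq v).le
      calc q v * Real.log (p v) - q v * Real.log (q v)
          = q v * (Real.log (p v) - Real.log (q v)) := by ring
        _ ≤ q v * (p v / q v - 1) := mul_le_mul_of_nonneg_left hlog (hq v).le
        _ = p v - q v := by rw [mul_sub, mul_one, mul_div_assoc', mul_comm (q v) (p v), mul_div_assoc, div_self (hq v).ne', mul_one]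
    calc ∑ v, q v * Real.log (p v) - ∑ v, q v * Real.log (q v)
        = ∑ v, (q v * Real.log (p v) - q v * Real.log (q v)) := by
          rw [Finset.sum_sub_distrib]
      _ ≤ ∑ v, (p v - q v) := Finset.sum_le_sum this
      _ = 0 := by rw [Finset.sum_sub_distrib, sump, sumq]; ring
  -- assemble
  have hps : softmax f = p := rfl
  have hqs : softmax (fun v => β * f v) = q := rfl
  rw [hps, hqs, shannonEntropy, shannonEntropy, neg_lt_neg_iff]
  have expand : ∀ (r : Fin V → ℝ), (∑ v, r v = 1) →
      ∑ v, r v * Real.log (p v) = ∑ v, r v * f v - Real.log A := by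
    intro r hr
    calc ∑ v, r v * Real.log (p v) = ∑ v, (r v * f v - r v * Real.log A) := by
          apply Finset.sum_congr rfl; intro v _; rw [hlogp v]; ring
      _ = ∑ v, r v * f v - (∑ v, r v) * Real.log A := by
          rw [Finset.sum_sub_distrib, Finset.sum_mul]
      _ = ∑ v, r v * f v - Real.log A := by rw [hr, one_mul]
  have e1 := expand p sump
  have e2 := expand q sumq
  have hmean' : ∑ v, (q v - p v) * f v = ∑ v, q v * f v - ∑ v, p v * f v := by
    rw [← Finset.sum_sub_distrib]
    apply Finset.sum_congr rfl; intro v _; ring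
  rw [hmean'] at hmean
  linarith
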